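/- Let a ∈ ℂ with |a| > 2, and let K_a = {z ∈ ℂ : the forward orbit {g_a^n(z) : n ≥ 0} is bounded}. Then there exists a homeomorphism h : K_a → Σ₂⁺ (K_a carrying the subspace topology from ℂ) such that h ∘ g_a = σ ∘ h on K_a; that is, g_a restricted to K_a is topologically conjugate to the one-sided full 2-shift. -/

import Mathlib

open Complex Metric Set Function ComplexConjugate Bornology Filter

namespace Complex

/-- Compatibility: the complex absolute value as an `AbsoluteValue`. -/
noncomputable def abs : AbsoluteValue ℂ ℝ := NormedField.toAbsoluteValue ℂ

theorem norm_eq_abs (z : ℂ) : ‖z‖ = Complex.abs z := rfl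

theorem abs_conj (z : ℂ) : Complex.abs (conj z) = Complex.abs z := norm_conj z

theorem abs_ofReal (r : ℝ) : Complex.abs (r : ℂ) = |r| := Complex.norm_real r

theorem normSq_eq_abs (z : ℂ) : normSq z = Complex.abs z ^ 2 := normSq_eq_norm_sq z

theorem continuous_abs : Continuous Complex.abs := continuous_norm

theorem abs_le_abs_of_mapsTo_ball_self {f : ℂ → ℂ} {R : ℝ} {z : ℂ}
    (hd : DifferentiableOn ℂ f (Metric.ball 0 R))
    (h_maps : MapsTo f (Metric.ball 0 R) (Metric.ball 0 R)) (h₀ : f 0 = 0)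
    (hz : Complex.abs z < R) : Complex.abs (f z) ≤ Complex.abs z :=
  norm_le_norm_of_mapsTo_ball hd (h_maps.mono_right Metric.ball_subset_closedBall) h₀ hz

end Complex

namespace QCH

noncomputable section

/-- The quadratic map. -/
def g (a z : ℂ) : ℂ := z ^ 2 + a

/-- Filled Julia set. -/
def KK (a : ℂ) : Set ℂ :=
  {z : ℂ | IsBounded (Set.range fun n : ℕ => (fun w : ℂ => w ^ 2 + a)^[n] z)}

lemma g_def (a : ℂ) : g a = fun w : ℂ => w ^ 2 + a := rfl

lemma mem_KK_iff {a z : ℂ} :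
    z ∈ KK a ↔ IsBounded (Set.range fun n : ℕ => (g a)^[n] z) := Iff.rfl

variable {a : ℂ}

lemma KK_invariant {z : ℂ} (hz : z ∈ KK a) : g a z ∈ KK a := by
  rw [mem_KK_iff] at hz ⊢
  refine hz.subset ?_
  rintro w ⟨n, rfl⟩
  exact ⟨n + 1, (Function.iterate_succ_apply _ _ _).symm⟩

lemma iter_mem_KK {z : ℂ} (hz : z ∈ KK a) (n : ℕ) : (g a)^[n] z ∈ KK a := by
  induction n with
  | zero => simpa using hz
  | succ n ih => rw [Function.iterate_succ_apply']; exact KK_invariant ih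

/-- Escape estimate: points of `KK a` satisfy `|z| ≤ |a|`. -/
lemma abs_le_of_mem (ha : 2 < Complex.abs a) {z : ℂ} (hz : z ∈ KK a) :
    Complex.abs z ≤ Complex.abs a := by
  by_contra h
  push_neg at h
  have hr0 : (0:ℝ) < Complex.abs a := by linarith
  have hz0 : 0 < Complex.abs z := by linarith
  have key : ∀ n, Complex.abs a < Complex.abs ((g a)^[n] z) ∧
      Complex.abs z * (Complex.abs a - 1) ^ n ≤ Complex.abs ((g a)^[n] z) := by
    intro n
    induction n with
    | zero => exact ⟨by simpa using h, by simp⟩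
    | succ n ih =>
      obtain ⟨ih1, ih2⟩ := ih
      set w := (g a)^[n] z with hw
      have hstep : Complex.abs w ^ 2 - Complex.abs a ≤ Complex.abs (g a w) := by
        have h1 : Complex.abs (w ^ 2) ≤ Complex.abs (w ^ 2 + a) + Complex.abs a := by
          have := Complex.abs.add_le (w ^ 2 + a) (-a)
          rw [add_neg_cancel_right, Complex.abs.map_neg] at this
          exact this
        have h2 : Complex.abs (w ^ 2) = Complex.abs w ^ 2 := by rw [map_pow]
        rw [g]; linarith
      rw [Function.iterate_succ_apply', ← hw]
      constructor
      · nlinarith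
      · have : Complex.abs z * (Complex.abs a - 1) ^ n * (Complex.abs a - 1)
            ≤ Complex.abs w * (Complex.abs a - 1) := by nlinarith
        rw [pow_succ]
        nlinarith
  rw [mem_KK_iff] at hz
  obtain ⟨C, hC⟩ := hz.exists_norm_le
  have hone : (1:ℝ) < Complex.abs a - 1 := by linarith
  obtain ⟨n, hn⟩ := pow_unbounded_of_one_lt (C / Complex.abs z) hone
  have h1 := (key n).2
  have h2 := hC _ ⟨n, rfl⟩
  rw [Complex.norm_eq_abs] at h2
  have : C < Complex.abs z * (Complex.abs a - 1) ^ n := by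
    rw [div_lt_iff₀ hz0] at hn; nlinarith
  linarith

section

variable {a : ℂ}

/-- The radius `S = sqrt (2|a|)`. -/
def SS (a : ℂ) : ℝ := Real.sqrt (2 * Complex.abs a)

lemma SS_sq (ha : 2 < Complex.abs a) : SS a ^ 2 = 2 * Complex.abs a :=
  Real.sq_sqrt (by linarith)

lemma SS_pos (ha : 2 < Complex.abs a) : 0 < SS a :=
  Real.sqrt_pos.2 (by linarith)

lemma SS_lt (ha : 2 < Complex.abs a) : SS a < Complex.abs a := by
  have h1 := SS_sq ha
  have h2 := SS_pos ha
  nlinarith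

lemma le_of_sq_le_sq {x y : ℝ} (hy : 0 ≤ y) (h : x ^ 2 ≤ y ^ 2) : x ≤ y := by nlinarith

lemma abs_le_SS (ha : 2 < Complex.abs a) {z : ℂ} (hz : z ∈ KK a) :
    Complex.abs z ≤ SS a := by
  have h1 : Complex.abs (g a z) ≤ Complex.abs a := abs_le_of_mem ha (KK_invariant hz)
  have h2 : Complex.abs (z ^ 2) ≤ Complex.abs (g a z) + Complex.abs a := by
    have := Complex.abs.add_le (g a z) (-a)
    rw [show g a z + -a = z ^ 2 by rw [g]; ring, Complex.abs.map_neg] at this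
    exact this
  rw [map_pow] at h2
  refine le_of_sq_le_sq (SS_pos ha).le ?_
  rw [SS_sq ha]; linarith

/-- Points of the Julia set lie in the union of the two sectors `Re (z² conj a) < 0`. -/
lemma re_sq_conj_neg (ha : 2 < Complex.abs a) {z : ℂ} (hz : z ∈ KK a) :
    (z ^ 2 * conj a).re < 0 := by
  have h1 : Complex.abs (g a z) ≤ SS a := abs_le_SS ha (KK_invariant hz)
  have h2 : normSq (z ^ 2 + a) ≤ 2 * Complex.abs a := by
    rw [normSq_eq_abs]
    have := SS_sq ha
    nlinarith [Complex.abs.nonneg (z ^ 2 + a), SS_pos ha,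
      show Complex.abs (z ^ 2 + a) ≤ SS a from h1]
  rw [normSq_add] at h2
  have h3 : normSq a = Complex.abs a ^ 2 := normSq_eq_abs a
  nlinarith [normSq_nonneg (z ^ 2), Complex.abs.nonneg a]

lemma im_ne_of_sq_re_neg {w : ℂ} (h : (w ^ 2).re < 0) : w.im ≠ 0 := by
  intro h0
  rw [pow_two, Complex.mul_re, h0] at h
  nlinarith [sq_nonneg w.re]

/-- The coding bit. -/
def bitb (b z : ℂ) : Bool := decide (0 < (z * b).im)

lemma im_mul_ne {b z : ℂ} (ha : 2 < Complex.abs a) (hb : b ^ 2 = conj a)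
    (hz : z ∈ KK a) : (z * b).im ≠ 0 := by
  apply im_ne_of_sq_re_neg
  rw [mul_pow, hb]
  exact re_sq_conj_neg ha hz

lemma bitb_neg {b z : ℂ} (h : (z * b).im ≠ 0) : bitb b (-z) = !bitb b z := by
  have hrw : (-z) * b = -(z * b) := by ring
  rw [bitb, bitb, hrw, Complex.neg_im]
  rcases h.lt_or_gt with h' | h'
  · rw [decide_eq_true (by linarith : 0 < -(z * b).im),
      decide_eq_false (not_lt.2 h'.le)]; rfl
  · rw [decide_eq_false (not_lt.2 (by linarith : -(z * b).im ≤ 0)),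
      decide_eq_true h']; rfl

lemma lt_of_sq_lt_sq {x y : ℝ} (hx : 0 ≤ x) (hy : 0 ≤ y) (h : x ^ 2 < y ^ 2) : x < y := by nlinarith

end

section Branch

variable {a b d : ℂ}

def sqrtc (z : ℂ) : ℂ := z ^ ((2 : ℂ)⁻¹)

lemma sqrtc_sq {z : ℂ} (hz : z ≠ 0) : sqrtc z ^ 2 = z := by
  rw [sqrtc, pow_two, ← Complex.cpow_add _ _ hz]
  norm_num

def Fb (a d w : ℂ) : ℂ := sqrtc (-(w - a) * conj a) * d

lemma arg_re_pos (ha : 2 < Complex.abs a) {w : ℂ} (hw : Complex.abs w < Complex.abs a) :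
    0 < (-(w - a) * conj a).re := by
  have h1 : -(w - a) * conj a = (↑(normSq a) : ℂ) - w * conj a := by
    rw [← Complex.mul_conj]; ring
  rw [h1, Complex.sub_re, Complex.ofReal_re]
  have h2 : (w * conj a).re ≤ Complex.abs (w * conj a) := Complex.re_le_norm _
  rw [map_mul, Complex.abs_conj] at h2
  have h3 : normSq a = Complex.abs a ^ 2 := normSq_eq_abs a
  nlinarith [Complex.abs.nonneg w, Complex.abs.nonneg a]

lemma arg_ne_zero (ha : 2 < Complex.abs a) {w : ℂ} (hw : Complex.abs w < Complex.abs a) :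
    -(w - a) * conj a ≠ 0 := by
  intro h0
  have h1 := arg_re_pos ha hw
  rw [h0] at h1
  simp at h1

lemma Fb_sq (ha : 2 < Complex.abs a) (hd : d ^ 2 = -(conj a)⁻¹) {w : ℂ}
    (hw : Complex.abs w < Complex.abs a) : Fb a d w ^ 2 = w - a := by
  have hca : conj a ≠ 0 := by
    simp only [ne_eq, map_eq_zero]
    intro h0
    rw [h0] at ha
    simp at ha
    linarith
  rw [Fb, mul_pow, sqrtc_sq (arg_ne_zero ha hw), hd]
  field_simp

lemma Fb_abs_lt (ha : 2 < Complex.abs a) (hd : d ^ 2 = -(conj a)⁻¹) {w : ℂ}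
    (hw : Complex.abs w < Complex.abs a) : Complex.abs (Fb a d w) < SS a := by
  have h1 : Complex.abs (Fb a d w) ^ 2 = Complex.abs (w - a) := by
    rw [← map_pow, Fb_sq ha hd hw]
  have h2 : Complex.abs (w - a) ≤ Complex.abs w + Complex.abs a := by
    have := Complex.abs.add_le w (-a)
    rwa [← sub_eq_add_neg, Complex.abs.map_neg] at this
  refine lt_of_sq_lt_sq (Complex.abs.nonneg _) (SS_pos ha).le ?_
  rw [h1, SS_sq ha]
  linarith

lemma Fb_diff (ha : 2 < Complex.abs a) :
    DifferentiableOn ℂ (Fb a d) (ball (0:ℂ) (Complex.abs a)) := by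
  intro w hw
  have hw' := mem_ball_zero_iff.1 hw
  apply DifferentiableAt.differentiableWithinAt
  have h1 : DifferentiableAt ℂ (fun w : ℂ => -(w - a) * conj a) w :=
    ((differentiableAt_id.sub_const a).neg.mul_const _)
  have h2 : (-(w - a) * conj a) ∈ Complex.slitPlane := Or.inl (arg_re_pos ha hw')
  exact ((h1.cpow (differentiableAt_const _) h2).mul_const d)

lemma Fb_im_ne (ha : 2 < Complex.abs a) (hb : b ^ 2 = conj a) (hd : d ^ 2 = -(conj a)⁻¹)
    {w : ℂ} (hw : Complex.abs w < Complex.abs a) : ((Fb a d w) * b).im ≠ 0 := by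
  apply im_ne_of_sq_re_neg
  rw [mul_pow, hb, Fb_sq ha hd hw]
  have h1 := arg_re_pos ha hw
  have hrw : (w - a) * conj a = -(-(w - a) * conj a) := by ring
  rw [hrw, Complex.neg_re]
  linarith

lemma Fb_sign (ha : 2 < Complex.abs a) (hb : b ^ 2 = conj a) (hd : d ^ 2 = -(conj a)⁻¹)
    {w : ℂ} (hw : Complex.abs w < Complex.abs a) :
    (0 < ((Fb a d w) * b).im ↔ 0 < ((Fb a d 0) * b).im) := by
  have h0 : (0:ℂ) ∈ ball (0:ℂ) (Complex.abs a) := by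
    rw [mem_ball_zero_iff]; rw [norm_zero]; linarith
  have hwm : w ∈ ball (0:ℂ) (Complex.abs a) := mem_ball_zero_iff.2 hw
  have hcont : ContinuousOn (fun u => ((Fb a d u) * b).im) (ball (0:ℂ) (Complex.abs a)) :=
    Complex.continuous_im.comp_continuousOn ((Fb_diff ha).continuousOn.mul continuousOn_const)
  have hprec : IsPreconnected (ball (0:ℂ) (Complex.abs a)) := (convex_ball _ _).isPreconnected
  have key : ∀ u ∈ ball (0:ℂ) (Complex.abs a), ∀ v ∈ ball (0:ℂ) (Complex.abs a),
      ((Fb a d u) * b).im ≤ 0 → 0 < ((Fb a d v) * b).im → False := by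
    intro u hu v hv h1 h2
    have hmem : (0:ℝ) ∈ Icc (((Fb a d u) * b).im) (((Fb a d v) * b).im) := ⟨h1, h2.le⟩
    obtain ⟨u0, hu0, he⟩ := hprec.intermediate_value hu hv hcont hmem
    exact Fb_im_ne ha hb hd (mem_ball_zero_iff.1 hu0) he
  constructor
  · intro h; by_contra h'; exact key _ h0 _ hwm (not_lt.1 h') h
  · intro h; by_contra h'; exact key _ hwm _ h0 (not_lt.1 h') h

def eps0 (a b d : ℂ) : Bool := bitb b (Fb a d 0)

lemma bitb_Fb (ha : 2 < Complex.abs a) (hb : b ^ 2 = conj a) (hd : d ^ 2 = -(conj a)⁻¹)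
    {w : ℂ} (hw : Complex.abs w < Complex.abs a) : bitb b (Fb a d w) = eps0 a b d := by
  rw [bitb, eps0, bitb]
  exact decide_eq_decide.2 (Fb_sign ha hb hd hw)

/-- The two inverse branches of `g a`. -/
def br (a b d : ℂ) (ε : Bool) (w : ℂ) : ℂ :=
  if ε = eps0 a b d then Fb a d w else -Fb a d w

lemma br_sq (ha : 2 < Complex.abs a) (hd : d ^ 2 = -(conj a)⁻¹) {ε : Bool} {w : ℂ}
    (hw : Complex.abs w < Complex.abs a) : br a b d ε w ^ 2 = w - a := by
  rw [br]; split <;> simp [Fb_sq ha hd hw]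

lemma br_g (ha : 2 < Complex.abs a) (hd : d ^ 2 = -(conj a)⁻¹) {ε : Bool} {w : ℂ}
    (hw : Complex.abs w < Complex.abs a) : g a (br a b d ε w) = w := by
  rw [g, br_sq ha hd hw]; ring

lemma br_abs_lt (ha : 2 < Complex.abs a) (hd : d ^ 2 = -(conj a)⁻¹) {ε : Bool} {w : ℂ}
    (hw : Complex.abs w < Complex.abs a) : Complex.abs (br a b d ε w) < SS a := by
  rw [br]; split
  · exact Fb_abs_lt ha hd hw
  · rw [Complex.abs.map_neg]; exact Fb_abs_lt ha hd hw

lemma br_bit (ha : 2 < Complex.abs a) (hb : b ^ 2 = conj a) (hd : d ^ 2 = -(conj a)⁻¹)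
    {ε : Bool} {w : ℂ} (hw : Complex.abs w < Complex.abs a) :
    bitb b (br a b d ε w) = ε := by
  rw [br]; split
  · next h => rw [bitb_Fb ha hb hd hw, h]
  · next h =>
    rw [bitb_neg (Fb_im_ne ha hb hd hw), bitb_Fb ha hb hd hw]
    cases hε : ε <;> cases he : eps0 a b d <;> simp_all

lemma br_diff (ha : 2 < Complex.abs a) {ε : Bool} :
    DifferentiableOn ℂ (br a b d ε) (ball (0:ℂ) (Complex.abs a)) := by
  have hrw : br a b d ε = if ε = eps0 a b d then Fb a d else fun w => -Fb a d w := by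
    funext w
    rw [br]
    split
    · rfl
    · rfl
  rw [hrw]
  split
  · exact Fb_diff ha
  · exact (Fb_diff ha).neg

lemma gz_abs_lt (ha : 2 < Complex.abs a) {z : ℂ} (hz : z ∈ KK a) :
    Complex.abs (g a z) < Complex.abs a :=
  lt_of_le_of_lt (abs_le_SS ha (KK_invariant hz)) (SS_lt ha)

lemma br_self (ha : 2 < Complex.abs a) (hb : b ^ 2 = conj a) (hd : d ^ 2 = -(conj a)⁻¹)
    {z : ℂ} (hz : z ∈ KK a) : br a b d (bitb b z) (g a z) = z := by
  have hgw := gz_abs_lt ha hz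
  have h2 : br a b d (bitb b z) (g a z) ^ 2 = z ^ 2 := by
    rw [br_sq ha hd hgw, g]; ring
  have h3 : (br a b d (bitb b z) (g a z) - z) * (br a b d (bitb b z) (g a z) + z) = 0 := by
    linear_combination h2
  rcases mul_eq_zero.1 h3 with h | h
  · exact sub_eq_zero.1 h
  · exfalso
    have h4 : br a b d (bitb b z) (g a z) = -z := by linear_combination h
    have h5 := br_bit ha hb hd hgw (ε := bitb b z)
    rw [h4, bitb_neg (im_mul_ne ha hb hz)] at h5
    simp at h5

end Branch

section Metric

/-- Fundamental identity for the pseudo-hyperbolic metric. -/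
lemma key_identity (r : ℝ) (u v : ℂ) :
    normSq (((r ^ 2 : ℝ) : ℂ) - conj u * v) - r ^ 2 * normSq (u - v)
      = (r ^ 2 - normSq u) * (r ^ 2 - normSq v) := by
  simp only [Complex.normSq_apply, Complex.sub_re, Complex.sub_im, Complex.mul_re,
    Complex.mul_im, Complex.conj_re, Complex.conj_im, Complex.ofReal_re, Complex.ofReal_im]
  ring

lemma one_sub_conj_mul_identity (c w : ℂ) :
    normSq (1 - conj c * w) - normSq (w - c) = (1 - normSq c) * (1 - normSq w) := by
  have h := key_identity 1 c w
  have h1 : (((1:ℝ) ^ 2 : ℝ) : ℂ) = 1 := by norm_num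
  rw [h1] at h
  have h2 : normSq (c - w) = normSq (w - c) := by
    rw [show c - w = -(w - c) by ring, normSq_neg]
  rw [h2] at h
  simpa using h

lemma unit_aux {c w : ℂ} (hc : Complex.abs c < 1) (hw : Complex.abs w < 1) :
    Complex.abs (w - c) < Complex.abs (1 - conj c * w) := by
  have h := one_sub_conj_mul_identity c w
  have hc2 : normSq c < 1 := by rw [normSq_eq_abs]; nlinarith [Complex.abs.nonneg c]
  have hw2 : normSq w < 1 := by rw [normSq_eq_abs]; nlinarith [Complex.abs.nonneg w]
  have hpos : 0 < (1 - normSq c) * (1 - normSq w) := by nlinarith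
  refine lt_of_sq_lt_sq (Complex.abs.nonneg _) (Complex.abs.nonneg _) ?_
  rw [← normSq_eq_abs, ← normSq_eq_abs]
  linarith

lemma unit_denom_pos {c w : ℂ} (hc : Complex.abs c < 1) (hw : Complex.abs w < 1) :
    0 < Complex.abs (1 - conj c * w) :=
  lt_of_le_of_lt (Complex.abs.nonneg _) (unit_aux hc hw)

/-- Möbius transformation of the unit disk. -/
def moeb (c w : ℂ) : ℂ := (w - c) / (1 - conj c * w)

lemma moeb_denom_ne {c w : ℂ} (hc : Complex.abs c < 1) (hw : Complex.abs w < 1) :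
    (1 : ℂ) - conj c * w ≠ 0 := by
  intro h0
  have := unit_denom_pos hc hw
  rw [h0] at this
  simp at this

lemma moeb_abs_lt {c w : ℂ} (hc : Complex.abs c < 1) (hw : Complex.abs w < 1) :
    Complex.abs (moeb c w) < 1 := by
  rw [moeb, map_div₀, div_lt_one (unit_denom_pos hc hw)]
  exact unit_aux hc hw

lemma moeb_diffOn {c : ℂ} (hc : Complex.abs c < 1) :
    DifferentiableOn ℂ (moeb c) (ball (0:ℂ) 1) := by
  intro w hw
  have hw' := mem_ball_zero_iff.1 hw
  apply DifferentiableAt.differentiableWithinAt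
  exact (differentiableAt_id.sub_const c).div
    ((differentiableAt_const _).sub ((differentiableAt_const _).mul differentiableAt_id))
    (moeb_denom_ne hc hw')

lemma one_sub_conj_self_ne {u : ℂ} (hu : Complex.abs u < 1) :
    (1 : ℂ) - conj u * u ≠ 0 := by
  have h : conj u * u = (normSq u : ℂ) := by rw [mul_comm, Complex.mul_conj]
  rw [h, ← Complex.ofReal_one, ← Complex.ofReal_sub, Complex.ofReal_ne_zero]
  have : normSq u < 1 := by rw [normSq_eq_abs]; nlinarith [Complex.abs.nonneg u]
  linarith

lemma moeb_inv {u v : ℂ} (hu : Complex.abs u < 1) (hv : Complex.abs v < 1) :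
    moeb (-u) (moeb u v) = v := by
  have h1 : (1 : ℂ) - conj u * v ≠ 0 := moeb_denom_ne hu hv
  have h2 : (1 : ℂ) - conj u * u ≠ 0 := one_sub_conj_self_ne hu
  rw [moeb, moeb, map_neg]
  rw [div_sub' h1, div_eq_iff]
  · rw [show (1:ℂ) - -conj u * ((v - u) / (1 - conj u * v))
        = (1 - conj u * v + conj u * (v - u)) / (1 - conj u * v) by
      rw [eq_div_iff h1, sub_mul, neg_mul, neg_mul, mul_assoc, div_mul_cancel₀ _ h1]; ring]
    rw [mul_div_assoc', div_left_inj' h1]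
    ring
  · intro h0
    apply h2
    have h3 : (1 - conj u * v) * (1 - -conj u * ((v - u) / (1 - conj u * v))) =
        1 - conj u * u := by
      field_simp
      ring
    rw [h0, mul_zero] at h3
    exact h3.symm

/-- Schwarz–Pick inequality for the unit disk (cross-multiplied form). -/
lemma schwarz_pick_unit {f : ℂ → ℂ} (hf : DifferentiableOn ℂ f (ball (0:ℂ) 1))
    (hm : MapsTo f (ball (0:ℂ) 1) (ball (0:ℂ) 1)) {u v : ℂ}
    (hu : Complex.abs u < 1) (hv : Complex.abs v < 1) :
    Complex.abs (f v - f u) * Complex.abs (1 - conj u * v) ≤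
      Complex.abs (v - u) * Complex.abs (1 - conj (f u) * f v) := by
  have hum : u ∈ ball (0:ℂ) 1 := mem_ball_zero_iff.2 hu
  have hvm : v ∈ ball (0:ℂ) 1 := mem_ball_zero_iff.2 hv
  have hfu : Complex.abs (f u) < 1 := mem_ball_zero_iff.1 (hm hum)
  have hfv : Complex.abs (f v) < 1 := mem_ball_zero_iff.1 (hm hvm)
  have hnu : Complex.abs (-u) < 1 := by rwa [Complex.abs.map_neg]
  set G : ℂ → ℂ := fun w => moeb (f u) (f (moeb (-u) w)) with hG
  have hTmaps : MapsTo (moeb (-u)) (ball (0:ℂ) 1) (ball (0:ℂ) 1) := fun w hw =>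
    mem_ball_zero_iff.2 (moeb_abs_lt hnu (mem_ball_zero_iff.1 hw))
  have hfm2 : MapsTo (fun w => f (moeb (-u) w)) (ball (0:ℂ) 1) (ball (0:ℂ) 1) :=
    fun w hw => hm (hTmaps hw)
  have hGm : MapsTo G (ball (0:ℂ) 1) (ball (0:ℂ) 1) := fun w hw =>
    mem_ball_zero_iff.2 (moeb_abs_lt hfu (mem_ball_zero_iff.1 (hfm2 hw)))
  have hGd : DifferentiableOn ℂ G (ball (0:ℂ) 1) := by
    apply DifferentiableOn.comp (moeb_diffOn hfu)
      (DifferentiableOn.comp hf (moeb_diffOn hnu) hTmaps) hfm2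
  have hT0 : moeb (-u) 0 = u := by
    rw [moeb]; simp
  have hG0 : G 0 = 0 := by
    show moeb (f u) (f (moeb (-u) 0)) = 0
    rw [hT0, moeb, sub_self, zero_div]
  set ζ : ℂ := moeb u v with hζ
  have hζlt : Complex.abs ζ < 1 := moeb_abs_lt hu hv
  have habs := Complex.abs_le_abs_of_mapsTo_ball_self hGd hGm hG0 hζlt
  have hGζ : G ζ = moeb (f u) (f v) := by
    rw [hG]; simp only [hζ, moeb_inv hu hv]
  rw [hGζ] at habs
  have hrw : moeb (f u) (f v) = (f v - f u) / (1 - conj (f u) * f v) := rfl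
  have hrw2 : moeb u v = (v - u) / (1 - conj u * v) := rfl
  rw [hζ, hrw, hrw2, map_div₀, map_div₀] at habs
  rw [div_le_div_iff₀ (unit_denom_pos hfu hfv) (unit_denom_pos hu hv)] at habs
  linarith

/-- Schwarz–Pick for maps between centered disks (cross-multiplied form). -/
lemma schwarz_pick_scaled {f : ℂ → ℂ} {r s : ℝ} (hr : 0 < r) (hs : 0 < s)
    (hf : DifferentiableOn ℂ f (ball (0:ℂ) r)) (hm : MapsTo f (ball (0:ℂ) r) (ball (0:ℂ) s))
    {u v : ℂ} (hu : Complex.abs u < r) (hv : Complex.abs v < r) :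
    s * (Complex.abs (f v - f u) * Complex.abs (((r ^ 2 : ℝ) : ℂ) - conj u * v)) ≤
      r * (Complex.abs (v - u) * Complex.abs (((s ^ 2 : ℝ) : ℂ) - conj (f u) * f v)) := by
  have hrc : ((r : ℝ) : ℂ) ≠ 0 := by
    simp only [ne_eq, Complex.ofReal_eq_zero]; exact hr.ne'
  have hsc : ((s : ℝ) : ℂ) ≠ 0 := by
    simp only [ne_eq, Complex.ofReal_eq_zero]; exact hs.ne'
  set f1 : ℂ → ℂ := fun x => f ((r : ℂ) * x) / (s : ℂ) with hf1
  have habs_mul : ∀ x : ℂ, Complex.abs ((r : ℂ) * x) = r * Complex.abs x := by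
    intro x; rw [map_mul, Complex.abs_ofReal, abs_of_pos hr]
  have hmap1 : MapsTo (fun x : ℂ => (r : ℂ) * x) (ball (0:ℂ) 1) (ball (0:ℂ) r) := by
    intro x hx
    rw [mem_ball_zero_iff] at hx ⊢
    rw [Complex.norm_eq_abs] at hx ⊢
    rw [habs_mul]
    nlinarith [Complex.abs.nonneg x]
  have hd1 : DifferentiableOn ℂ f1 (ball (0:ℂ) 1) := by
    apply DifferentiableOn.div_const
    exact hf.comp (((differentiable_const ((r:ℂ))).mul differentiable_id).differentiableOn) hmap1
  have hm1 : MapsTo f1 (ball (0:ℂ) 1) (ball (0:ℂ) 1) := by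
    intro x hx
    rw [mem_ball_zero_iff, Complex.norm_eq_abs]
    have h1 : Complex.abs (f ((r:ℂ) * x)) < s := by
      rw [← Complex.norm_eq_abs, ← mem_ball_zero_iff]
      exact hm (hmap1 hx)
    rw [hf1]
    simp only
    rw [map_div₀, Complex.abs_ofReal, abs_of_pos hs, div_lt_one hs]
    exact h1
  have hu1 : Complex.abs (u / (r : ℂ)) < 1 := by
    rw [map_div₀, Complex.abs_ofReal, abs_of_pos hr, div_lt_one hr]; exact hu
  have hv1 : Complex.abs (v / (r : ℂ)) < 1 := by
    rw [map_div₀, Complex.abs_ofReal, abs_of_pos hr, div_lt_one hr]; exact hv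
  have hsp := schwarz_pick_unit hd1 hm1 hu1 hv1
  have e0u : (r : ℂ) * (u / (r : ℂ)) = u := by field_simp
  have e0v : (r : ℂ) * (v / (r : ℂ)) = v := by field_simp
  have e1 : f1 (u / (r:ℂ)) = f u / (s:ℂ) := by rw [hf1]; simp only [e0u]
  have e2 : f1 (v / (r:ℂ)) = f v / (s:ℂ) := by rw [hf1]; simp only [e0v]
  rw [e1, e2] at hsp
  have e3 : (1 : ℂ) - conj (u / (r:ℂ)) * (v / (r:ℂ))
      = (((r ^ 2 : ℝ) : ℂ) - conj u * v) / ((r:ℂ)) ^ 2 := by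
    rw [map_div₀, Complex.conj_ofReal]
    push_cast
    field_simp
  have e4 : (1 : ℂ) - conj (f u / (s:ℂ)) * (f v / (s:ℂ))
      = (((s ^ 2 : ℝ) : ℂ) - conj (f u) * f v) / ((s:ℂ)) ^ 2 := by
    rw [map_div₀, Complex.conj_ofReal]
    push_cast
    field_simp
  have e5 : f v / (s:ℂ) - f u / (s:ℂ) = (f v - f u) / (s:ℂ) := by ring
  have e6 : v / (r:ℂ) - u / (r:ℂ) = (v - u) / (r:ℂ) := by ring
  rw [e3, e4, e5, e6, map_div₀, map_div₀, map_div₀, map_div₀] at hsp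
  rw [Complex.abs_ofReal, abs_of_pos hs] at hsp
  rw [Complex.abs_ofReal, abs_of_pos hr] at hsp
  have e7 : Complex.abs ((r:ℂ) ^ 2) = r ^ 2 := by
    rw [map_pow, Complex.abs_ofReal, abs_of_pos hr]
  have e8 : Complex.abs ((s:ℂ) ^ 2) = s ^ 2 := by
    rw [map_pow, Complex.abs_ofReal, abs_of_pos hs]
  rw [e7, e8] at hsp
  set A1 := Complex.abs (f v - f u)
  set B1 := Complex.abs (((r ^ 2 : ℝ) : ℂ) - conj u * v)
  set A2 := Complex.abs (v - u)
  set B2 := Complex.abs (((s ^ 2 : ℝ) : ℂ) - conj (f u) * f v)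
  have hA1 : 0 ≤ A1 := Complex.abs.nonneg _
  have hB1 : 0 ≤ B1 := Complex.abs.nonneg _
  have hA2 : 0 ≤ A2 := Complex.abs.nonneg _
  have hB2 : 0 ≤ B2 := Complex.abs.nonneg _
  rw [div_mul_div_comm, div_mul_div_comm, div_le_div_iff₀ (by positivity) (by positivity)] at hsp
  -- hsp : A1 * B1 * (r * s^2) ≤ A2 * B2 * (s * r^2)
  nlinarith [mul_pos hr hs]

/-- The key comparison: the inclusion of the small disk contracts the
pseudo-hyperbolic metric by factor `2rs/(r²+s²)`. -/
lemma comparison {r s : ℝ} (hs : 0 < s) (hsr : s < r) {x y : ℂ}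
    (hx : Complex.abs x ≤ s) (hy : Complex.abs y ≤ s) :
    (r ^ 2 + s ^ 2) * Complex.abs (((s ^ 2 : ℝ) : ℂ) - conj x * y) ≤
      2 * s ^ 2 * Complex.abs (((r ^ 2 : ℝ) : ℂ) - conj x * y) := by
  set t := (conj x * y).re with hts
  set w := (conj x * y).im with hws
  have habs : Complex.abs (conj x * y) ≤ s ^ 2 := by
    rw [map_mul, Complex.abs_conj]
    nlinarith [Complex.abs.nonneg x, Complex.abs.nonneg y]
  have hm : t * t + w * w ≤ s ^ 4 := by
    have h1 : normSq (conj x * y) ≤ s ^ 4 := by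
      rw [normSq_eq_abs]
      nlinarith [Complex.abs.nonneg (conj x * y)]
    rw [Complex.normSq_apply] at h1
    exact h1
  have ht : -(s ^ 2) ≤ t := by
    have h1 : |t| ≤ s ^ 2 := le_trans (Complex.abs_re_le_norm _) habs
    have := neg_abs_le t
    linarith [abs_nonneg t]
  have eA : Complex.abs (((s ^ 2 : ℝ) : ℂ) - conj x * y) ^ 2 = (s ^ 2 - t) ^ 2 + w ^ 2 := by
    rw [← normSq_eq_abs]
    simp only [Complex.normSq_apply, Complex.sub_re, Complex.sub_im, Complex.ofReal_re,
      Complex.ofReal_im, ← hts, ← hws]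
    ring
  have eB : Complex.abs (((r ^ 2 : ℝ) : ℂ) - conj x * y) ^ 2 = (r ^ 2 - t) ^ 2 + w ^ 2 := by
    rw [← normSq_eq_abs]
    simp only [Complex.normSq_apply, Complex.sub_re, Complex.sub_im, Complex.ofReal_re,
      Complex.ofReal_im, ← hts, ← hws]
    ring
  have h1 : 0 ≤ ((r ^ 2 + s ^ 2) ^ 2 - 4 * s ^ 4) * (s ^ 4 - (t * t + w * w)) := by
    apply mul_nonneg
    · nlinarith [mul_nonneg (sub_nonneg.2 (by nlinarith : s ^ 2 ≤ r ^ 2))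
        (by positivity : (0:ℝ) ≤ r ^ 2 + 3 * s ^ 2)]
    · linarith
  have h2 : 0 ≤ 2 * s ^ 2 * (r ^ 2 - s ^ 2) ^ 2 * (s ^ 2 + t) := by
    apply mul_nonneg
    · positivity
    · linarith
  refine le_of_sq_le_sq (by positivity) ?_
  rw [mul_pow, mul_pow, eA, eB]
  nlinarith [h1, h2]

/-- Pseudo-hyperbolic distance (unnormalized). -/
def pd (r : ℝ) (u v : ℂ) : ℝ :=
  Complex.abs (u - v) / Complex.abs (((r ^ 2 : ℝ) : ℂ) - conj u * v)

lemma denom_pos {r : ℝ} {u v : ℂ} (hu : Complex.abs u < r) (hv : Complex.abs v < r) :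
    0 < Complex.abs (((r ^ 2 : ℝ) : ℂ) - conj u * v) := by
  have hr : 0 < r := lt_of_le_of_lt (Complex.abs.nonneg u) hu
  have h1 : Complex.abs (conj u * v) < r ^ 2 := by
    rw [map_mul, Complex.abs_conj]
    nlinarith [Complex.abs.nonneg u, Complex.abs.nonneg v]
  have h3 := Complex.abs.add_le ((((r ^ 2 : ℝ)) : ℂ) - conj u * v) (conj u * v)
  have h4 : (((r ^ 2 : ℝ)) : ℂ) - conj u * v + conj u * v = (((r ^ 2 : ℝ)) : ℂ) := by ring
  rw [h4, Complex.abs_ofReal, abs_of_pos (by positivity : (0:ℝ) < r ^ 2)] at h3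
  linarith

lemma denom_le {r : ℝ} (hr : 0 < r) {u v : ℂ} (hu : Complex.abs u < r)
    (hv : Complex.abs v < r) :
    Complex.abs (((r ^ 2 : ℝ) : ℂ) - conj u * v) ≤ 2 * r ^ 2 := by
  have h1 : Complex.abs (conj u * v) ≤ r ^ 2 := by
    rw [map_mul, Complex.abs_conj]
    nlinarith [Complex.abs.nonneg u, Complex.abs.nonneg v]
  have h3 := Complex.abs.sub_le_add ((((r ^ 2 : ℝ)) : ℂ)) (conj u * v)
  rw [Complex.abs_ofReal, abs_of_pos (by positivity : (0:ℝ) < r ^ 2)] at h3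
  linarith

lemma pd_le {r : ℝ} {u v : ℂ} (hu : Complex.abs u < r) (hv : Complex.abs v < r) :
    pd r u v ≤ 1 / r := by
  have hr : 0 < r := lt_of_le_of_lt (Complex.abs.nonneg u) hu
  have hkey : r * Complex.abs (u - v) ≤ Complex.abs (((r ^ 2 : ℝ) : ℂ) - conj u * v) := by
    have hid := key_identity r u v
    have h1 : 0 ≤ (r ^ 2 - normSq u) * (r ^ 2 - normSq v) := by
      have hu2 : normSq u < r ^ 2 := by
        rw [normSq_eq_abs]; nlinarith [Complex.abs.nonneg u]
      have hv2 : normSq v < r ^ 2 := by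
        rw [normSq_eq_abs]; nlinarith [Complex.abs.nonneg v]
      nlinarith
    refine le_of_sq_le_sq (Complex.abs.nonneg _) ?_
    rw [mul_pow, ← normSq_eq_abs, ← normSq_eq_abs]
    linarith
  rw [pd, div_le_div_iff₀ (denom_pos hu hv) hr]
  linarith

lemma abs_sub_le_pd {r : ℝ} (hr : 0 < r) {u v : ℂ} (hu : Complex.abs u < r)
    (hv : Complex.abs v < r) :
    Complex.abs (u - v) ≤ 2 * r ^ 2 * pd r u v := by
  have h1 : Complex.abs (u - v) = pd r u v * Complex.abs (((r ^ 2 : ℝ) : ℂ) - conj u * v) := by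
    rw [pd, div_mul_cancel₀]
    exact (denom_pos hu hv).ne'
  rw [h1]
  have h2 := denom_le hr hu hv
  have h3 : 0 ≤ pd r u v := div_nonneg (Complex.abs.nonneg _) (Complex.abs.nonneg _)
  nlinarith

/-- The central contraction estimate for a holomorphic map into the smaller disk. -/
lemma pd_contraction {f : ℂ → ℂ} {r s : ℝ} (hs : 0 < s) (hsr : s < r)
    (hf : DifferentiableOn ℂ f (ball (0:ℂ) r))
    (hm : MapsTo f (ball (0:ℂ) r) (ball (0:ℂ) s))
    {u v : ℂ} (hu : Complex.abs u < r) (hv : Complex.abs v < r) :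
    pd r (f u) (f v) ≤ (2 * r * s / (r ^ 2 + s ^ 2)) * pd r u v := by
  have hr : 0 < r := hs.trans hsr
  have hfu : Complex.abs (f u) < s := mem_ball_zero_iff.1 (hm (mem_ball_zero_iff.2 hu))
  have hfv : Complex.abs (f v) < s := mem_ball_zero_iff.1 (hm (mem_ball_zero_iff.2 hv))
  have hsp := schwarz_pick_scaled hr hs hf hm hu hv
  have hcmp := comparison hs hsr hfu.le hfv.le (x := f u) (y := f v)
  set A1 := Complex.abs (f v - f u) with hA1s
  set B1 := Complex.abs (((r ^ 2 : ℝ) : ℂ) - conj u * v) with hB1s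
  set A2 := Complex.abs (v - u) with hA2s
  set B2s := Complex.abs (((s ^ 2 : ℝ) : ℂ) - conj (f u) * f v) with hB2ss
  set B2r := Complex.abs (((r ^ 2 : ℝ) : ℂ) - conj (f u) * f v) with hB2rs
  have h1 := mul_le_mul_of_nonneg_left hsp (show (0:ℝ) ≤ r ^ 2 + s ^ 2 by positivity)
  have h2 := mul_le_mul_of_nonneg_left hcmp (mul_nonneg hr.le (Complex.abs.nonneg (v - u)))
  have h3 : (r ^ 2 + s ^ 2) * (s * (A1 * B1)) ≤ (r * A2) * (2 * s ^ 2 * B2r) := by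
    refine le_trans h1 ?_
    calc (r ^ 2 + s ^ 2) * (r * (A2 * B2s)) = (r * A2) * ((r ^ 2 + s ^ 2) * B2s) := by ring
    _ ≤ (r * A2) * (2 * s ^ 2 * B2r) := h2
  have h4 : (r ^ 2 + s ^ 2) * (A1 * B1) ≤ 2 * r * s * (A2 * B2r) := by
    have h5 : s * ((r ^ 2 + s ^ 2) * (A1 * B1)) ≤ s * (2 * r * s * (A2 * B2r)) := by
      nlinarith [h3]
    exact le_of_mul_le_mul_left h5 hs
  have hB1pos : 0 < B1 := denom_pos hu hv
  have hB2rpos : 0 < B2r := denom_pos (hfu.trans hsr) (hfv.trans hsr)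
  have epd1 : pd r (f u) (f v) = A1 / B2r := by
    rw [pd, hA1s, Complex.abs.map_sub]
  have epd2 : pd r u v = A2 / B1 := by
    rw [pd, hA2s, Complex.abs.map_sub]
  calc pd r (f u) (f v) = A1 / B2r := epd1
  _ ≤ (2 * r * s * A2) / ((r ^ 2 + s ^ 2) * B1) := by
      rw [div_le_div_iff₀ hB2rpos (mul_pos (by positivity) hB1pos)]
      nlinarith [h4]
  _ = (2 * r * s / (r ^ 2 + s ^ 2)) * (A2 / B1) := (div_mul_div_comm _ _ _ _).symm
  _ = (2 * r * s / (r ^ 2 + s ^ 2)) * pd r u v := by rw [epd2]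

end Metric

section Dynamics

variable {a b d : ℂ}

/-- The contraction factor. -/
def lam (a : ℂ) : ℝ :=
  2 * Complex.abs a * SS a / ((Complex.abs a) ^ 2 + (SS a) ^ 2)

lemma lam_nonneg (ha : 2 < Complex.abs a) : 0 ≤ lam a := by
  rw [lam]
  have h1 := SS_pos ha
  positivity

lemma lam_lt_one (ha : 2 < Complex.abs a) : lam a < 1 := by
  rw [lam, div_lt_one (by positivity)]
  have h1 := SS_pos ha
  have h2 := SS_lt ha
  nlinarith [mul_pos (sub_pos.2 h2) (sub_pos.2 h2)]

lemma g_cont (a : ℂ) : Continuous (g a) := by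
  rw [g_def]
  exact (continuous_pow 2).add continuous_const

lemma KK_abs_lt (ha : 2 < Complex.abs a) {z : ℂ} (hz : z ∈ KK a) :
    Complex.abs z < Complex.abs a :=
  lt_of_le_of_lt (abs_le_SS ha hz) (SS_lt ha)

lemma br_mapsTo (ha : 2 < Complex.abs a) (hd : d ^ 2 = -(conj a)⁻¹) (ε : Bool) :
    MapsTo (br a b d ε) (ball (0:ℂ) (Complex.abs a)) (ball (0:ℂ) (SS a)) := by
  intro w hw
  rw [mem_ball_zero_iff] at hw ⊢
  rw [Complex.norm_eq_abs] at hw ⊢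
  exact br_abs_lt ha hd hw

lemma br_pd_contraction (ha : 2 < Complex.abs a) (hd : d ^ 2 = -(conj a)⁻¹)
    {ε : Bool} {u v : ℂ} (hu : Complex.abs u < Complex.abs a)
    (hv : Complex.abs v < Complex.abs a) :
    pd (Complex.abs a) (br a b d ε u) (br a b d ε v) ≤ lam a * pd (Complex.abs a) u v := by
  have h := pd_contraction (f := br a b d ε) (SS_pos ha) (SS_lt ha) (br_diff ha)
    (br_mapsTo ha hd ε) (u := u) (v := v) hu hv
  rw [lam]
  exact h

/-- Injectivity of the itinerary map. -/
lemma itinerary_inj (ha : 2 < Complex.abs a) (hb : b ^ 2 = conj a)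
    (hd : d ^ 2 = -(conj a)⁻¹) {z z' : ℂ} (hz : z ∈ KK a) (hz' : z' ∈ KK a)
    (hsame : ∀ n, bitb b ((g a)^[n] z) = bitb b ((g a)^[n] z')) : z = z' := by
  set r := Complex.abs a with hrs
  have hr : (0:ℝ) < r := by rw [hrs]; linarith
  have key : ∀ n, ∀ z z' : ℂ, z ∈ KK a → z' ∈ KK a →
      (∀ k, bitb b ((g a)^[k] z) = bitb b ((g a)^[k] z')) →
      pd r z z' ≤ lam a ^ n * (1 / r) := by
    intro n
    induction n with
    | zero =>
      intro z z' hz hz' _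
      simpa using pd_le (KK_abs_lt ha hz) (KK_abs_lt ha hz')
    | succ n ih =>
      intro z z' hz hz' hs
      have h0 : bitb b z = bitb b z' := by simpa using hs 0
      have e1 : br a b d (bitb b z) (g a z) = z := br_self ha hb hd hz
      have e2 : br a b d (bitb b z) (g a z') = z' := by
        rw [h0]; exact br_self ha hb hd hz'
      have hshift : ∀ k, bitb b ((g a)^[k] (g a z)) = bitb b ((g a)^[k] (g a z')) := by
        intro k
        rw [← Function.iterate_succ_apply, ← Function.iterate_succ_apply]
        exact hs (k + 1)
      have ih2 := ih (g a z) (g a z') (KK_invariant hz) (KK_invariant hz') hshift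
      have hc : pd r z z' ≤ lam a * pd r (g a z) (g a z') := by
        conv_lhs => rw [← e1, ← e2]
        exact br_pd_contraction ha hd (gz_abs_lt ha hz) (gz_abs_lt ha hz')
      calc pd r z z' ≤ lam a * pd r (g a z) (g a z') := hc
      _ ≤ lam a * (lam a ^ n * (1 / r)) := mul_le_mul_of_nonneg_left ih2 (lam_nonneg ha)
      _ = lam a ^ (n + 1) * (1 / r) := by ring
  have hbound : ∀ n, Complex.abs (z - z') ≤ 2 * r ^ 2 * (lam a ^ n * (1 / r)) := by
    intro n
    have h1 := abs_sub_le_pd hr (KK_abs_lt ha hz) (KK_abs_lt ha hz')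
    have h2 := key n z z' hz hz' hsame
    nlinarith [h1, h2, div_nonneg (Complex.abs.nonneg (z - z'))
      (Complex.abs.nonneg (((r ^ 2 : ℝ) : ℂ) - conj z * z'))]
  have hlim : Tendsto (fun n : ℕ => 2 * r ^ 2 * (lam a ^ n * (1 / r))) atTop (nhds 0) := by
    have h := tendsto_pow_atTop_nhds_zero_of_lt_one (lam_nonneg ha) (lam_lt_one ha)
    have h2 : Tendsto (fun n : ℕ => (2 * r ^ 2 * (1 / r)) * lam a ^ n) atTop
        (nhds ((2 * r ^ 2 * (1 / r)) * 0)) := h.const_mul _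
    rw [mul_zero] at h2
    have heq : (fun n : ℕ => 2 * r ^ 2 * (lam a ^ n * (1 / r)))
        = fun n : ℕ => (2 * r ^ 2 * (1 / r)) * lam a ^ n := by
      funext n; ring
    rw [heq]
    exact h2
  have h0 : Complex.abs (z - z') ≤ 0 :=
    ge_of_tendsto hlim (Filter.Eventually.of_forall hbound)
  have h1 : Complex.abs (z - z') = 0 := le_antisymm h0 (Complex.abs.nonneg _)
  rw [map_eq_zero] at h1
  exact sub_eq_zero.1 h1

/-- Backward orbits along a prescribed itinerary. -/
def psi (a b d : ℂ) (x : ℕ → Bool) : ℕ → ℕ → ℂ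
  | _, 0 => 0
  | k, m + 1 => br a b d (x k) (psi a b d x (k + 1) m)

lemma psi_abs_lt (ha : 2 < Complex.abs a) (hd : d ^ 2 = -(conj a)⁻¹) (x : ℕ → Bool) :
    ∀ m k, Complex.abs (psi a b d x k m) < Complex.abs a := by
  intro m
  induction m with
  | zero =>
    intro k
    show Complex.abs 0 < Complex.abs a
    rw [map_zero]; linarith
  | succ m ih =>
    intro k
    exact (br_abs_lt ha hd (ih (k + 1))).trans (SS_lt ha)

lemma psi_pd (ha : 2 < Complex.abs a) (hd : d ^ 2 = -(conj a)⁻¹) (x : ℕ → Bool) :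
    ∀ j m m' k, pd (Complex.abs a) (psi a b d x k (j + m)) (psi a b d x k (j + m'))
      ≤ lam a ^ j * (1 / Complex.abs a) := by
  intro j
  induction j with
  | zero =>
    intro m m' k
    simpa using pd_le (psi_abs_lt (b := b) ha hd x m k) (psi_abs_lt (b := b) ha hd x m' k)
  | succ j ih =>
    intro m m' k
    have e1 : j + 1 + m = (j + m) + 1 := by omega
    have e2 : j + 1 + m' = (j + m') + 1 := by omega
    rw [e1, e2]
    have h1 : pd (Complex.abs a) (psi a b d x k ((j + m) + 1)) (psi a b d x k ((j + m') + 1))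
        ≤ lam a * pd (Complex.abs a) (psi a b d x (k + 1) (j + m))
          (psi a b d x (k + 1) (j + m')) :=
      br_pd_contraction ha hd (psi_abs_lt (b := b) ha hd x _ _) (psi_abs_lt (b := b) ha hd x _ _)
    have h2 : lam a * pd (Complex.abs a) (psi a b d x (k + 1) (j + m))
        (psi a b d x (k + 1) (j + m')) ≤ lam a * (lam a ^ j * (1 / Complex.abs a)) :=
      mul_le_mul_of_nonneg_left (ih m m' (k + 1)) (lam_nonneg ha)
    exact h1.trans (h2.trans (le_of_eq (by ring)))

lemma psi_dist (ha : 2 < Complex.abs a) (hd : d ^ 2 = -(conj a)⁻¹) (x : ℕ → Bool)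
    (m k : ℕ) :
    dist (psi a b d x k m) (psi a b d x k (m + 1)) ≤ (2 * Complex.abs a) * lam a ^ m := by
  set r := Complex.abs a with hrs
  have hr : (0:ℝ) < r := by rw [hrs]; linarith
  have h1 := psi_pd (b := b) ha hd x m 0 1 k
  rw [Nat.add_zero] at h1
  have h2 := abs_sub_le_pd hr (psi_abs_lt (b := b) ha hd x m k) (psi_abs_lt (b := b) ha hd x (m + 1) k)
  rw [Complex.dist_eq]
  rw [← hrs] at h1
  have h3 := mul_le_mul_of_nonneg_left h1 (by positivity : (0:ℝ) ≤ 2 * r ^ 2)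
  refine h2.trans (h3.trans (le_of_eq ?_))
  field_simp

/-- Surjectivity of the itinerary map. -/
lemma itinerary_surj (ha : 2 < Complex.abs a) (hb : b ^ 2 = conj a)
    (hd : d ^ 2 = -(conj a)⁻¹) (x : ℕ → Bool) :
    ∃ z ∈ KK a, ∀ n, bitb b ((g a)^[n] z) = x n := by
  set r := Complex.abs a with hrs
  have hr : (0:ℝ) < r := by rw [hrs]; linarith
  have hcs : ∀ k, ∃ l, Tendsto (fun m => psi a b d x k m) atTop (nhds l) := by
    intro k
    apply cauchySeq_tendsto_of_complete
    exact cauchySeq_of_le_geometric (lam a) (2 * r) (lam_lt_one ha)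
      (fun m => psi_dist ha hd x m k)
  choose zeta hzeta using hcs
  have hzS : ∀ k, Complex.abs (zeta k) ≤ SS a := by
    intro k
    have ht : Tendsto (fun m => Complex.abs (psi a b d x k m)) atTop
        (nhds (Complex.abs (zeta k))) :=
      (Complex.continuous_abs.tendsto _).comp (hzeta k)
    refine le_of_tendsto ht ?_
    refine Filter.eventually_atTop.2 ⟨1, ?_⟩
    intro m hm
    obtain ⟨m', rfl⟩ : ∃ m', m = m' + 1 := ⟨m - 1, by omega⟩
    exact (br_abs_lt ha hd (psi_abs_lt (b := b) ha hd x m' (k + 1))).le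
  have hg : ∀ k, g a (zeta k) = zeta (k + 1) := by
    intro k
    have t1 : Tendsto (fun m => psi a b d x k (m + 1)) atTop (nhds (zeta k)) :=
      (hzeta k).comp (tendsto_add_atTop_nat 1)
    have t3 : Tendsto (fun m => g a (psi a b d x k (m + 1))) atTop (nhds (g a (zeta k))) :=
      ((g_cont a).tendsto _).comp t1
    have heq : (fun m => g a (psi a b d x k (m + 1))) = fun m => psi a b d x (k + 1) m := by
      funext m
      exact br_g ha hd (psi_abs_lt (b := b) ha hd x m (k + 1))
    rw [heq] at t3
    exact tendsto_nhds_unique t3 (hzeta (k + 1))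
  have hiter : ∀ n k, (g a)^[n] (zeta k) = zeta (n + k) := by
    intro n
    induction n with
    | zero => intro k; simp
    | succ n ih =>
      intro k
      rw [Function.iterate_succ_apply, hg k, ih (k + 1)]
      congr 1
      omega
  have hmem : ∀ k, zeta k ∈ KK a := by
    intro k
    rw [mem_KK_iff]
    apply (Metric.isBounded_closedBall (x := (0:ℂ)) (r := SS a)).subset
    rintro w ⟨n, rfl⟩
    show (g a)^[n] (zeta k) ∈ closedBall (0:ℂ) (SS a)
    rw [hiter n k, Metric.mem_closedBall, dist_zero_right, Complex.norm_eq_abs]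
    exact hzS (n + k)
  refine ⟨zeta 0, hmem 0, ?_⟩
  intro n
  have h1 : (g a)^[n] (zeta 0) = zeta n := by rw [hiter n 0]; norm_num
  rw [h1]
  have him : (zeta n * b).im ≠ 0 := im_mul_ne ha hb (hmem n)
  have t1 : Tendsto (fun m => ((psi a b d x n (m + 1)) * b).im) atTop
      (nhds ((zeta n * b).im)) := by
    have hc : Continuous (fun z : ℂ => (z * b).im) :=
      Complex.continuous_im.comp (continuous_id.mul continuous_const)
    exact (hc.tendsto _).comp ((hzeta n).comp (tendsto_add_atTop_nat 1))
  have hbitm : ∀ m, bitb b (psi a b d x n (m + 1)) = x n := fun m =>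
    br_bit ha hb hd (psi_abs_lt (b := b) ha hd x m (n + 1))
  cases hxn : x n with
  | true =>
    have hpos : ∀ m, 0 < ((psi a b d x n (m + 1)) * b).im := by
      intro m
      have h := hbitm m
      rw [hxn, bitb] at h
      exact of_decide_eq_true h
    have hge : 0 ≤ (zeta n * b).im :=
      ge_of_tendsto t1 (Filter.Eventually.of_forall (fun m => (hpos m).le))
    rw [bitb]
    exact decide_eq_true (lt_of_le_of_ne hge (Ne.symm him))
  | false =>
    have hneg : ∀ m, ¬ (0 < ((psi a b d x n (m + 1)) * b).im) := by
      intro m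
      have h := hbitm m
      rw [hxn, bitb] at h
      exact of_decide_eq_false h
    have hle : (zeta n * b).im ≤ 0 :=
      le_of_tendsto t1 (Filter.Eventually.of_forall (fun m => not_lt.1 (hneg m)))
    rw [bitb]
    exact decide_eq_false (not_lt.2 hle)

/-- Compactness of the filled Julia set. -/
lemma KK_isCompact (ha : 2 < Complex.abs a) : IsCompact (KK a) := by
  have heq : KK a = ⋂ n : ℕ, ((g a)^[n]) ⁻¹' (closedBall (0:ℂ) (SS a)) := by
    ext z
    simp only [mem_iInter, mem_preimage, Metric.mem_closedBall, dist_zero_right,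
      Complex.norm_eq_abs]
    constructor
    · intro hz n
      exact abs_le_SS ha (iter_mem_KK hz n)
    · intro h
      rw [mem_KK_iff]
      apply (Metric.isBounded_closedBall (x := (0:ℂ)) (r := SS a)).subset
      rintro w ⟨n, rfl⟩
      rw [Metric.mem_closedBall, dist_zero_right, Complex.norm_eq_abs]
      exact h n
  rw [heq]
  apply isCompact_of_isClosed_isBounded
  · exact isClosed_iInter (fun n => (Metric.isClosed_closedBall).preimage ((g_cont a).iterate n))
  · apply (Metric.isBounded_closedBall (x := (0:ℂ)) (r := SS a)).subset
    intro z hz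
    have := mem_iInter.1 hz 0
    simpa using this

/-- Continuity of the coding map coordinates. -/
lemma bit_iter_continuous (ha : 2 < Complex.abs a) (hb : b ^ 2 = conj a) (n : ℕ) :
    Continuous (fun z : (KK a) => bitb b ((g a)^[n] (z : ℂ))) := by
  have hφ : Continuous (fun z : (KK a) => (((g a)^[n] (z : ℂ)) * b).im) :=
    Complex.continuous_im.comp
      (((((g_cont a).iterate n).comp continuous_subtype_val)).mul continuous_const)
  have hne : ∀ z : (KK a), (((g a)^[n] (z : ℂ)) * b).im ≠ 0 := fun z =>
    im_mul_ne ha hb (iter_mem_KK z.2 n)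
  rw [continuous_iff_continuousAt]
  intro z0
  rcases (hne z0).lt_or_gt with hlt | hlt
  · have hev : (fun z : (KK a) => (((g a)^[n] (z : ℂ)) * b).im) ⁻¹' (Iio 0) ∈ nhds z0 :=
      hφ.continuousAt.preimage_mem_nhds (Iio_mem_nhds hlt)
    refine (continuousAt_const (y := false)).congr ?_
    refine Filter.eventuallyEq_of_mem hev (fun z hz => ?_)
    exact (decide_eq_false (not_lt.2 (le_of_lt (show (((g a)^[n] (z : ℂ)) * b).im < 0 from hz)))).symm
  · have hev : (fun z : (KK a) => (((g a)^[n] (z : ℂ)) * b).im) ⁻¹' (Ioi 0) ∈ nhds z0 :=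
      hφ.continuousAt.preimage_mem_nhds (Ioi_mem_nhds hlt)
    refine (continuousAt_const (y := true)).congr ?_
    refine Filter.eventuallyEq_of_mem hev (fun z hz => ?_)
    exact (decide_eq_true (show (0:ℝ) < (((g a)^[n] (z : ℂ)) * b).im from hz)).symm

end Dynamics

end

end QCH

/-- The one-sided full 2-shift space: one-sided sequences on two symbols, with the
product topology (each factor discrete). -/
abbrev Sigma2Plus : Type := ℕ → Bool

/-- For `|a| > 2`, the restriction of `g_a(z) = z² + a` to its filled Julia set
`K_a = {z : forward orbit bounded}` is topologically conjugate to the one-sided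
full 2-shift: `K_a` is invariant, and there is a homeomorphism `h : K_a → Σ₂⁺` with
`h ∘ g_a = σ ∘ h`. -/
theorem quadratic_complex_horseshoe (a : ℂ) (ha : 2 < ‖a‖)
    (Ka : Set ℂ)
    (hKa : Ka = {z : ℂ | Bornology.IsBounded
      (Set.range fun n : ℕ => (fun w : ℂ => w ^ 2 + a)^[n] z)}) :
    (∀ z ∈ Ka, z ^ 2 + a ∈ Ka) ∧
    ∃ h : Ka ≃ₜ Sigma2Plus,
      ∀ (z : ℂ) (hz : z ∈ Ka) (hgz : z ^ 2 + a ∈ Ka),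
        h ⟨z ^ 2 + a, hgz⟩ = fun n => h ⟨z, hz⟩ (n + 1) := by
  have hKK : Ka = QCH.KK a := hKa
  subst hKK
  have ha0 : a ≠ 0 := by
    intro h
    rw [h] at ha
    rw [norm_zero] at ha
    linarith
  have hca : (starRingEnd ℂ) a ≠ 0 := by
    simpa using ha0
  obtain ⟨b, hb⟩ : ∃ b : ℂ, b ^ 2 = (starRingEnd ℂ) a :=
    ⟨QCH.sqrtc ((starRingEnd ℂ) a), QCH.sqrtc_sq hca⟩
  obtain ⟨d, hd⟩ : ∃ d : ℂ, d ^ 2 = -((starRingEnd ℂ) a)⁻¹ :=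
    ⟨QCH.sqrtc (-((starRingEnd ℂ) a)⁻¹), QCH.sqrtc_sq (by simpa using hca)⟩
  constructor
  · intro z hz
    exact QCH.KK_invariant (a := a) hz
  · set H : (QCH.KK a) → Sigma2Plus :=
      fun z => (fun n => QCH.bitb b ((QCH.g a)^[n] (z : ℂ))) with hH
    have hinj : Function.Injective H := by
      intro z z' h
      apply Subtype.ext
      exact QCH.itinerary_inj ha hb hd z.2 z'.2 (fun n => congrFun h n)
    have hsurj : Function.Surjective H := by
      intro x
      obtain ⟨z, hz, hbit⟩ := QCH.itinerary_surj ha hb hd x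
      exact ⟨⟨z, hz⟩, funext hbit⟩
    have hcont : Continuous H :=
      continuous_pi (fun n => QCH.bit_iter_continuous ha hb n)
    haveI : CompactSpace (QCH.KK a) := isCompact_iff_compactSpace.mp (QCH.KK_isCompact ha)
    refine ⟨Continuous.homeoOfEquivCompactToT2
      (f := Equiv.ofBijective H ⟨hinj, hsurj⟩) hcont, ?_⟩
    intro z hz hgz
    funext n
    show QCH.bitb b ((QCH.g a)^[n] (z ^ 2 + a)) = QCH.bitb b ((QCH.g a)^[n + 1] z)
    rw [Function.iterate_succ_apply]
    rfl
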